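/- Let a ∈ Bⁿ with 0 < |a| < 1, set a* = a/|a|², r² = |a*|² − 1, and σ_a(x) = a* + r²·(x − a*)/|x − a*|². Then for all x, y ∈ Bⁿ with x ≠ y and every p with |p| = 1, |σ_a(x) − σ_a(y)| / max(|σ_a(x) − σ_a(p)|, |σ_a(y) − σ_a(p)|) ≤ ((1+|a|)/(1−|a|)) · |x−y| / max(|x−p|, |y−p|). -/

import Mathlib

open Set Metric

/-- The point `a* = a/|a|²`. -/
noncomputable def aStar {E : Type*} [NormedAddCommGroup E] [NormedSpace ℝ E] (a : E) : E :=
  (‖a‖ ^ 2)⁻¹ • a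

/-- The inversion `σ_a(x) = a* + r²·(x − a*)/|x − a*|²` in the sphere of center `a*`
and radius `r`, where `r² = |a*|² − 1`. -/
noncomputable def sigmaInv {E : Type*} [NormedAddCommGroup E] [NormedSpace ℝ E] (a x : E) :
    E :=
  aStar a + ((‖aStar a‖ ^ 2 - 1) / ‖x - aStar a‖ ^ 2) • (x - aStar a)

lemma key_ratio (r2 A B C dxy dxp dyp lo hi : ℝ) (hr2 : 0 < r2) (hlo : 0 < lo)
    (hA : lo ≤ A) (hB : lo ≤ B) (hC0 : 0 < C) (hC : C ≤ hi)
    (hdxy : 0 < dxy) (hdxp : 0 < dxp) (hdyp : 0 < dyp) :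
    (r2 / (A * B) * dxy) / max (r2 / (A * C) * dxp) (r2 / (B * C) * dyp) ≤
      hi / lo * (dxy / max dxp dyp) := by
  have hA0 : 0 < A := lt_of_lt_of_le hlo hA
  have hB0 : 0 < B := lt_of_lt_of_le hlo hB
  have hhi : 0 < hi := lt_of_lt_of_le hC0 hC
  rcases max_cases (r2 / (A * C) * dxp) (r2 / (B * C) * dyp) with ⟨h1, h1'⟩ | ⟨h1, h1'⟩ <;>
    rw [h1] <;>
    rcases max_cases dxp dyp with ⟨h2, h2'⟩ | ⟨h2, h2'⟩ <;> rw [h2] <;>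
    rw [div_mul_div_comm, div_le_div_iff₀ (by positivity) (by positivity)]
  · -- left x-term, right dxp : need C*lo ≤ hi*B
    have h6 : C * lo ≤ hi * B := mul_le_mul hC hB hlo.le hhi.le
    have e1 : r2 / (A * B) * dxy * (lo * dxp) = (C * lo) * (r2 * dxy * dxp) / (A * B * C) := by
      field_simp
    have e2 : hi * dxy * (r2 / (A * C) * dxp) = (hi * B) * (r2 * dxy * dxp) / (A * B * C) := by
      field_simp
    rw [e1, e2]
    gcongr
  · -- left x-term, right dyp; hyp: r2/(B*C)*dyp ≤ r2/(A*C)*dxp ⟹ A*dyp ≤ B*dxp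
    have hAd : A * dyp ≤ B * dxp := by
      rw [div_mul_eq_mul_div, div_mul_eq_mul_div,
        div_le_div_iff₀ (by positivity) (by positivity)] at h1'
      nlinarith [mul_pos hr2 hC0]
    have h5 : lo * dyp ≤ B * dxp := le_trans (by nlinarith) hAd
    have h6 : C * (lo * dyp) ≤ hi * (B * dxp) := mul_le_mul hC h5 (by positivity) hhi.le
    have e1 : r2 / (A * B) * dxy * (lo * dyp) = (C * (lo * dyp)) * (r2 * dxy) / (A * B * C) := by
      field_simp
    have e2 : hi * dxy * (r2 / (A * C) * dxp) = (hi * (B * dxp)) * (r2 * dxy) / (A * B * C) := by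
      field_simp
    rw [e1, e2]
    gcongr
  · -- left y-term, right dxp; hyp: r2/(A*C)*dxp ≤ r2/(B*C)*dyp ⟹ B*dxp ≤ A*dyp
    have hAd : B * dxp ≤ A * dyp := by
      rw [div_mul_eq_mul_div, div_mul_eq_mul_div,
        div_lt_div_iff₀ (by positivity) (by positivity)] at h1'
      nlinarith [mul_pos hr2 hC0]
    have h5 : lo * dxp ≤ A * dyp := le_trans (by nlinarith : lo * dxp ≤ B * dxp) hAd
    have h6 : C * (lo * dxp) ≤ hi * (A * dyp) := mul_le_mul hC h5 (by positivity) hhi.le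
    have e1 : r2 / (A * B) * dxy * (lo * dxp) = (C * (lo * dxp)) * (r2 * dxy) / (A * B * C) := by
      field_simp
    have e2 : hi * dxy * (r2 / (B * C) * dyp) = (hi * (A * dyp)) * (r2 * dxy) / (A * B * C) := by
      field_simp
    rw [e1, e2]
    gcongr
  · -- left y-term, right dyp : need C*lo ≤ hi*A
    have h6 : C * lo ≤ hi * A := mul_le_mul hC hA hlo.le hhi.le
    have e1 : r2 / (A * B) * dxy * (lo * dyp) = (C * lo) * (r2 * dxy * dyp) / (A * B * C) := by
      field_simp
    have e2 : hi * dxy * (r2 / (B * C) * dyp) = (hi * A) * (r2 * dxy * dyp) / (A * B * C) := by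
      field_simp
    rw [e1, e2]
    gcongr

open Set Metric

lemma sigmaInv_eq_inversion {E : Type*} [NormedAddCommGroup E] [InnerProductSpace ℝ E]
    (a z : E) (h : 0 ≤ ‖aStar a‖ ^ 2 - 1) :
    sigmaInv a z = EuclideanGeometry.inversion (aStar a) (Real.sqrt (‖aStar a‖ ^ 2 - 1)) z := by
  rw [sigmaInv, EuclideanGeometry.inversion, vsub_eq_sub, vadd_eq_add, dist_eq_norm, div_pow,
    Real.sq_sqrt h, add_comm]


/-- Theorem: for `a ∈ Bⁿ \ {0}`, distinct `x, y ∈ Bⁿ` and `p` with `|p| = 1`,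
`|σ_a(x) − σ_a(y)| / max(|σ_a(x) − σ_a(p)|, |σ_a(y) − σ_a(p)|)
  ≤ ((1+|a|)/(1−|a|)) · |x−y| / max(|x−p|, |y−p|)`. -/
theorem sigmaInv_pointwise_distortion {n : ℕ} (hn : 2 ≤ n)
    (a x y p : EuclideanSpace ℝ (Fin n)) (ha0 : a ≠ 0) (ha1 : ‖a‖ < 1)
    (hx : ‖x‖ < 1) (hy : ‖y‖ < 1) (hxy : x ≠ y) (hp : ‖p‖ = 1) :
    ‖sigmaInv a x - sigmaInv a y‖ /
        max ‖sigmaInv a x - sigmaInv a p‖ ‖sigmaInv a y - sigmaInv a p‖ ≤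
      (1 + ‖a‖) / (1 - ‖a‖) * (‖x - y‖ / max ‖x - p‖ ‖y - p‖) := by
  have hna : 0 < ‖a‖ := norm_pos_iff.mpr ha0
  set c := aStar a with hc
  have hcn : ‖c‖ = ‖a‖⁻¹ := by
    rw [hc, aStar, norm_smul, Real.norm_eq_abs, abs_of_pos (by positivity)]
    field_simp
  have hc1 : 1 < ‖c‖ := by
    rw [hcn]
    exact (one_lt_inv₀ hna).mpr ha1
  set r2 := ‖c‖ ^ 2 - 1 with hr2def
  have hr2 : 0 < r2 := by nlinarith
  have hne : ∀ z : EuclideanSpace ℝ (Fin n), ‖z‖ ≤ 1 → z ≠ c := by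
    intro z hz h
    rw [h] at hz; linarith
  have hxc := hne x hx.le
  have hyc := hne y hy.le
  have hpc := hne p hp.le
  have hdist : ∀ u v : EuclideanSpace ℝ (Fin n), u ≠ c → v ≠ c →
      ‖sigmaInv a u - sigmaInv a v‖ = r2 / (‖u - c‖ * ‖v - c‖) * ‖u - v‖ := by
    intro u v hu hv
    rw [← dist_eq_norm, sigmaInv_eq_inversion a u hr2.le, sigmaInv_eq_inversion a v hr2.le,
      EuclideanGeometry.dist_inversion_inversion hu hv, Real.sq_sqrt hr2.le,
      dist_eq_norm, dist_eq_norm, dist_eq_norm]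
  have hxp : x ≠ p := fun h => by rw [h, hp] at hx; linarith
  have hyp : y ≠ p := fun h => by rw [h, hp] at hy; linarith
  have hlo : ∀ z : EuclideanSpace ℝ (Fin n), ‖z‖ ≤ 1 → ‖c‖ - 1 ≤ ‖z - c‖ := by
    intro z hz
    calc ‖c‖ - 1 ≤ ‖c‖ - ‖z‖ := by linarith
      _ ≤ ‖c - z‖ := norm_sub_norm_le c z
      _ = ‖z - c‖ := norm_sub_rev c z
  have hK : (1 + ‖a‖) / (1 - ‖a‖) = (‖c‖ + 1) / (‖c‖ - 1) := by
    rw [hcn, div_eq_div_iff (by linarith) (by rw [← hcn]; linarith)]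
    field_simp
  rw [hdist x y hxc hyc, hdist x p hxc hpc, hdist y p hyc hpc, hK]
  exact key_ratio r2 ‖x - c‖ ‖y - c‖ ‖p - c‖ ‖x - y‖ ‖x - p‖ ‖y - p‖ (‖c‖ - 1) (‖c‖ + 1)
    hr2 (by linarith) (hlo x hx.le) (hlo y hy.le)
    (norm_sub_pos_iff.mpr hpc)
    ((norm_sub_le p c).trans (by rw [hp]; linarith))
    (norm_sub_pos_iff.mpr hxy) (norm_sub_pos_iff.mpr hxp) (norm_sub_pos_iff.mpr hyp)
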